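/- Let f satisfy hypothesis (H1): f continuous, f(0)=f(s₀)=f(1)=0 with 0<s₀<1, f<0 on (0,s₀)∪(1,∞), f>0 on (-∞,0)∪(s₀,1), and F(r)=∫₀^r f < 0 for all 0 < r ≤ 1. Let c > 0 and let v : ℝ → ℝ be a C² solution of v'' + c·v' + f(v) = 0 with limits 0 at -∞ and 1 at +∞. If z₀ ∈ ℝ satisfies v(z₀) = 0 and v'(z₀) = 0, and 0 ≤ v ≤ 1 on ℝ, then v(z) = 0 for all z ≤ z₀. -/

import Mathlib

open Filter Set

theorem stmt_3 (f : ℝ → ℝ) (s₀ c : ℝ) (v : ℝ → ℝ) (z₀ : ℝ)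
    (hf : Continuous f) (hs₀ : 0 < s₀) (hs₀1 : s₀ < 1)
    (hf0 : f 0 = 0) (hfs₀ : f s₀ = 0) (hf1 : f 1 = 0)
    (hneg : ∀ s, (s ∈ Ioo 0 s₀ ∨ s ∈ Ioi 1) → f s < 0)
    (hpos : ∀ s, (s ∈ Iio 0 ∨ s ∈ Ioo s₀ 1) → 0 < f s)
    (hF : ∀ r, 0 < r → r ≤ 1 → (∫ s in (0:ℝ)..r, f s) < 0)
    (hc : 0 < c)
    (hv : ContDiff ℝ 2 v)
    (hode : ∀ z, deriv (deriv v) z + c * deriv v z + f (v z) = 0)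
    (hbot : Tendsto v atBot (nhds 0)) (htop : Tendsto v atTop (nhds 1))
    (h01 : ∀ z, 0 ≤ v z ∧ v z ≤ 1)
    (hvz₀ : v z₀ = 0) (hdz₀ : deriv v z₀ = 0) :
    ∀ z ≤ z₀, v z = 0 := by
  -- differentiability facts
  have hdv : Differentiable ℝ v := hv.differentiable (by norm_num)
  have h1 : ContDiff ℝ 1 (deriv v) := by
    have := (contDiff_succ_iff_deriv (n := 1)).mp (by exact_mod_cast hv)
    exact this.2.2
  have hddv : Differentiable ℝ (deriv v) := h1.differentiable (by norm_num)
  set E : ℝ → ℝ := fun z => (deriv v z) ^ 2 / 2 + ∫ s in (0:ℝ)..(v z), f s with hEdef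
  have hE : ∀ z, HasDerivAt E (-c * (deriv v z) ^ 2) z := by
    intro z
    have hd1 : HasDerivAt (deriv v) (deriv (deriv v) z) z := (hddv z).hasDerivAt
    have hsq : HasDerivAt (fun z => (deriv v z) ^ 2 / 2)
        (deriv v z * deriv (deriv v) z) z := by
      have := (hd1.pow 2).div_const 2
      refine this.congr_deriv ?_
      ring
    have hFd : HasDerivAt (fun z => ∫ s in (0:ℝ)..(v z), f s)
        (f (v z) * deriv v z) z := by
      have h2 : HasDerivAt (fun u => ∫ s in (0:ℝ)..u, f s) (f (v z)) (v z) :=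
        (hf.integral_hasStrictDerivAt 0 (v z)).hasDerivAt
      exact h2.comp z (hdv z).hasDerivAt
    have := hsq.add hFd
    refine HasDerivAt.congr_deriv this (Eq.symm ?_)
    linear_combination (-(deriv v z)) * hode z
  have hanti : Antitone E := by
    apply antitone_of_deriv_nonpos (fun z => (hE z).differentiableAt)
    intro z
    rw [(hE z).deriv]
    nlinarith [sq_nonneg (deriv v z)]
  have hE0 : E z₀ = 0 := by
    simp [hEdef, hvz₀, hdz₀]
  intro z hz
  by_contra h
  have hvz : 0 < v z := lt_of_le_of_ne (h01 z).1 (Ne.symm h)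
  have hzlt : z < z₀ := lt_of_le_of_ne hz (by rintro rfl; exact h hvz₀)
  obtain ⟨a, ha⟩ := eventually_atBot.mp (hbot.eventually_lt_const hvz)
  set a' := min a z with ha'
  have ha'lt : ∀ x ≤ a', v x < v z := fun x hx => ha x (le_trans hx (min_le_left _ _))
  have ha'z : a' < z := by
    rcases lt_or_eq_of_le (min_le_right a z : a' ≤ z) with h' | h'
    · exact h'
    · have h2 := ha'lt a' le_rfl
      rw [ha', h'] at h2
      exact absurd h2 (lt_irrefl _)
  have hzmem : z ∈ Icc a' z₀ := ⟨ha'z.le, hz⟩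
  obtain ⟨zs, hzsmem, hmax⟩ :=
    (isCompact_Icc (a := a') (b := z₀)).exists_isMaxOn ⟨z, hzmem⟩
      hdv.continuous.continuousOn
  have hvzs : 0 < v zs := lt_of_lt_of_le hvz (hmax hzmem)
  have hzs1 : a' < zs := by
    rcases lt_or_eq_of_le hzsmem.1 with h' | h'
    · exact h'
    · have h2 := ha'lt zs h'.ge
      have h3 := hmax hzmem
      exact absurd (h3 : v z ≤ v zs) (not_le.mpr h2)
  have hzs2 : zs < z₀ := by
    rcases lt_or_eq_of_le hzsmem.2 with h' | h'
    · exact h'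
    · rw [h', hvz₀] at hvzs
      exact absurd hvzs (lt_irrefl _)
  have hloc : IsLocalMax v zs := hmax.isLocalMax (Icc_mem_nhds hzs1 hzs2)
  have hdzs : deriv v zs = 0 := hloc.deriv_eq_zero
  have hEzs : E zs < 0 := by
    have := hF (v zs) hvzs (h01 zs).2
    simp only [hEdef, hdzs]
    simpa using this
  have : (0:ℝ) ≤ E zs := by
    rw [← hE0]; exact hanti hzs2.le
  linarith
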